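/- Suppose Z ⊊ Y ⊊ X (nonempty, strict inclusions) and |Z| ≥ 2. Then there exists α ∈ T(X,Y,Z) such that no idempotent e ∈ T(X,Y,Z) has the same kernel partition as α. Consequently T(X,Y,Z) is not right abundant. -/
import Mathlib


/-- If Z ⊊ Y ⊊ X and |Z| ≥ 2, some α ∈ T(X,Y,Z) shares its kernel partition
with no idempotent of T(X,Y,Z); hence T(X,Y,Z) is not right abundant. -/
theorem stmt_12 {X : Type*} (Y Z : Set X) (hZY : Z ⊂ Y) (hYX : Y ⊂ Set.univ)
    (hZ2 : ∃ z₁ ∈ Z, ∃ z₂ ∈ Z, z₁ ≠ z₂) :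
    ∃ α : X → X, α '' Y ⊆ Z ∧
      ∀ e : X → X, e '' Y ⊆ Z → e ∘ e = e →
        ¬ (∀ x₁ x₂ : X, α x₁ = α x₂ ↔ e x₁ = e x₂) := by
  obtain ⟨z₁, hz₁, z₂, hz₂, hz⟩ := hZ2
  obtain ⟨y, hyY, hyZ⟩ := Set.exists_of_ssubset hZY
  classical
  refine ⟨fun u => if u = y then z₁ else z₂, ?_, ?_⟩
  · rintro _ ⟨u, -, rfl⟩
    by_cases h : u = y <;> simp [h, hz₁, hz₂]
  · intro e heZ hee hk
    have hvZ : e y ∈ Z := heZ ⟨y, hyY, rfl⟩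
    have hfix : e (e y) = e y := congrFun hee y
    have h := (hk (e y) y).mpr hfix
    by_cases hvy : e y = y
    · exact hyZ (hvy ▸ hvZ)
    · simp [hvy] at h
      exact hz h.symm
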